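/- For every c > 0: lim_{λ → ∞} d_TV(Po(λ + c), Po(λ)) = 0. -/

import Mathlib

open MeasureTheory ProbabilityTheory Finset Filter
open scoped ENNReal NNReal

noncomputable section

/-- The `k`-th harmonic number `H_k = ∑_{i=1}^k 1/i`, with `H_0 = 0`. -/
def harm (k : ℕ) : ℝ := ∑ i ∈ Finset.range k, (1 : ℝ) / (i + 1)

instance (n : ℕ) : MeasurableSpace (Equiv.Perm (Fin n)) := ⊤

/-- The uniform distribution on the permutations of `{1,…,n}`. -/
def uniformPerm (n : ℕ) : Measure (Equiv.Perm (Fin n)) :=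
  (PMF.uniformOfFintype (Equiv.Perm (Fin n))).toMeasure

/-- The (1-based) position `N = π⁻¹(l)` of the key `l` in the permutation `π`
(positions are `i+1` for `i : Fin n`, values are `π i + 1`). -/
def bstN (n l : ℕ) (π : Equiv.Perm (Fin n)) : ℕ :=
  1 + ∑ i : Fin n, if (π i : ℕ) + 1 = l then (i : ℕ) else 0

open scoped Classical in
/-- `R₋`: the number of ascending records in the subpermutation of values `< l`
appearing before the position of `l`. -/
def bstRminus (n l : ℕ) (π : Equiv.Perm (Fin n)) : ℕ :=
  (Finset.univ.filter fun r : Fin n =>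
    (r : ℕ) + 1 < bstN n l π ∧ (π r : ℕ) + 1 < l ∧
      ∀ k : Fin n, k < r → (π k : ℕ) + 1 < l → π k < π r).card

open scoped Classical in
/-- `R₊`: the number of descending records in the subpermutation of values `> l`
appearing before the position of `l`. -/
def bstRplus (n l : ℕ) (π : Equiv.Perm (Fin n)) : ℕ :=
  (Finset.univ.filter fun r : Fin n =>
    (r : ℕ) + 1 < bstN n l π ∧ (π r : ℕ) + 1 > l ∧
      ∀ k : Fin n, k < r → (π k : ℕ) + 1 > l → π r < π k).card

/-- `X_{n,l} = R₋ + R₊`: the depth of the node containing `l` in the binary search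
tree built from the permutation `π` of `{1,…,n}`. -/
def bstDepth (n l : ℕ) (π : Equiv.Perm (Fin n)) : ℕ :=
  bstRminus n l π + bstRplus n l π

open scoped Classical in
/-- `G = #{1 ≤ i < N : π(i) < l}`. -/
def bstG (n l : ℕ) (π : Equiv.Perm (Fin n)) : ℕ :=
  (Finset.univ.filter fun i : Fin n =>
    (i : ℕ) + 1 < bstN n l π ∧ (π i : ℕ) + 1 < l).card

/-- The expectation `E X_{n,l}` of the depth of the node containing `l`. -/
def bstExp (n l : ℕ) : ℝ := ∫ π, (bstDepth n l π : ℝ) ∂(uniformPerm n)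

/-- The hypergeometric probability mass function: for `X ~ HypGeo(N; M, n)`,
`P(X = k) = C(M,k)·C(N−M,n−k)/C(N,n)` for `0 ≤ k ≤ n` (and `0` otherwise). -/
def hypPMF (N M n k : ℕ) : ℝ :=
  if k ≤ n then (M.choose k * (N - M).choose (n - k) : ℝ) / (N.choose n) else 0

/-- Total variation distance between (probability) measures on `ℕ`. -/
def dTV (μ ν : Measure ℕ) : ℝ := ⨆ A : Set ℕ, |(μ A).toReal - (ν A).toReal|

/-- The Wasserstein-type distance `d_W` of Barbour–Holst–Janson: the supremum of
`|∫ f dμ − ∫ f dν|` over measurable `f` with `|f(x) − f(y)| ≤ 1` whenever `|x − y| ≤ 1`. -/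
def dW (μ ν : Measure ℝ) : ℝ :=
  sSup { d : ℝ | ∃ f : ℝ → ℝ, Measurable f ∧ (∀ x y, |x - y| ≤ 1 → |f x - f y| ≤ 1) ∧
    d = |∫ x, f x ∂μ - ∫ x, f x ∂ν| }

/-- The mixed Poisson distribution with mixing measure `ν`:
`MixPo(ν)({k}) = ∫ e^{−λ} λ^k / k! ν(dλ)`. -/
def mixPo (ν : Measure ℝ) : Measure ℕ :=
  Measure.sum fun k =>
    (∫⁻ l, ENNReal.ofReal (Real.exp (-l) * l ^ k / k.factorial) ∂ν) • Measure.dirac k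

/-- The standard normal cumulative distribution function `Φ`. -/
def stdNormalCDF (x : ℝ) : ℝ :=
  (1 / Real.sqrt (2 * Real.pi)) * ∫ y in Set.Iic x, Real.exp (-y ^ 2 / 2)

end

section PoissonHelpers

open ProbabilityTheory

private lemma poisson_apply' (r : ℝ≥0) (A : Set ℕ) :
    ((poissonMeasure r) A).toReal = ∑' k, A.indicator (poissonPMFReal r) k := by
  have hcoe : ∀ k, (poissonPMF r) k = ENNReal.ofReal (poissonPMFReal r k) := fun _ => rfl
  have hμ : poissonMeasure r = (poissonPMF r).toMeasure := by
    refine Measure.ext_of_singleton fun n => ?_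
    rw [poissonMeasure_singleton, PMF.toMeasure_apply_singleton _ _ (measurableSet_singleton n)]
    rfl
  rw [hμ, PMF.toMeasure_apply _ (A.to_countable.measurableSet),
    ENNReal.tsum_toReal_eq (fun a => ?_)]
  · congr 1; funext k
    by_cases hk : k ∈ A <;>
      simp [Set.indicator, hk, hcoe, ENNReal.toReal_ofReal poissonPMFReal_nonneg]
  · by_cases hk : a ∈ A <;> simp [Set.indicator, hk, hcoe]

private lemma tsum_exp' (x : ℝ) : ∑' n : ℕ, x ^ n / n.factorial = Real.exp x := by
  rw [Real.exp_eq_exp_ℝ, NormedSpace.exp_eq_tsum_div]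

private lemma poisson_chisq (lam c : ℝ≥0) (hlam : 0 < lam) :
    HasSum (fun k => (poissonPMFReal (lam + c) k - poissonPMFReal lam k) ^ 2
        / poissonPMFReal lam k)
      (Real.exp ((c : ℝ) ^ 2 / (lam : ℝ)) - 1) := by
  set a : ℝ := (lam : ℝ) + (c : ℝ) with ha_def
  set b : ℝ := (lam : ℝ) with hb_def
  have hb : 0 < b := hlam
  have hab : a = b + (c : ℝ) := ha_def
  have hkey : ∀ k : ℕ, (poissonPMFReal (lam + c) k - poissonPMFReal lam k) ^ 2
        / poissonPMFReal lam k
      = Real.exp (b - 2 * a) * ((a ^ 2 / b) ^ k / k.factorial)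
        - 2 * poissonPMFReal (lam + c) k + poissonPMFReal lam k := by
    intro k
    have hp : poissonPMFReal (lam + c) k = Real.exp (-a) * a ^ k / k.factorial := by
      simp [poissonPMFReal, ha_def, hb_def]
    have hq : poissonPMFReal lam k = Real.exp (-b) * b ^ k / k.factorial := rfl
    rw [hp, hq]
    have hE : Real.exp (b - 2 * a) = Real.exp (-a) ^ 2 / Real.exp (-b) := by
      rw [sq, ← Real.exp_add, ← Real.exp_sub]; ring_nf
    have hpow : (a ^ 2 / b) ^ k = (a ^ k) ^ 2 / b ^ k := by
      rw [div_pow, ← pow_mul, ← pow_mul, Nat.mul_comm]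
    rw [hE, hpow]
    have h1 : (Real.exp (-b)) ≠ 0 := Real.exp_ne_zero _
    have h2 : (b : ℝ) ^ k ≠ 0 := pow_ne_zero _ hb.ne'
    have h3 : (k.factorial : ℝ) ≠ 0 := Nat.cast_ne_zero.mpr k.factorial_ne_zero
    field_simp
    ring
  have h1 : HasSum (fun k : ℕ => (a ^ 2 / b) ^ k / k.factorial) (Real.exp (a ^ 2 / b)) := by
    have := (Real.summable_pow_div_factorial (a ^ 2 / b)).hasSum
    rwa [tsum_exp'] at this
  have hg := h1.mul_left (Real.exp (b - 2 * a))
  have hp1 : HasSum (poissonPMFReal (lam + c)) 1 := poissonPMFRealSum _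
  have hq1 : HasSum (poissonPMFReal lam) 1 := poissonPMFRealSum _
  have htot := (hg.sub (hp1.mul_left 2)).add hq1
  have hval : Real.exp (b - 2 * a) * Real.exp (a ^ 2 / b) - 2 * 1 + 1
      = Real.exp ((c : ℝ) ^ 2 / b) - 1 := by
    rw [← Real.exp_add]
    have : b - 2 * a + a ^ 2 / b = (c : ℝ) ^ 2 / b := by
      field_simp
      rw [hab]; ring
    rw [this]; ring
  rw [hval] at htot
  exact htot.congr_fun fun k => hkey k

private lemma poisson_l1_le (lam c : ℝ≥0) (hlam : 0 < lam)
    (hchi : Summable (fun k => (poissonPMFReal (lam + c) k - poissonPMFReal lam k) ^ 2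
        / poissonPMFReal lam k))
    (hchival : ∑' k, (poissonPMFReal (lam + c) k - poissonPMFReal lam k) ^ 2
        / poissonPMFReal lam k = Real.exp ((c : ℝ) ^ 2 / (lam : ℝ)) - 1) :
    ∑' k, |poissonPMFReal (lam + c) k - poissonPMFReal lam k|
      ≤ Real.sqrt (Real.exp ((c : ℝ) ^ 2 / (lam : ℝ)) - 1) := by
  set p := poissonPMFReal (lam + c)
  set q := poissonPMFReal lam
  have hps : Summable p := (poissonPMFRealSum _).summable
  have hqs : Summable q := (poissonPMFRealSum _).summable
  have habs : Summable fun k => |p k - q k| := (hps.sub hqs).abs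
  have hq : ∀ k, 0 < q k := fun k => poissonPMFReal_pos hlam
  have hnn : ∀ k : ℕ, 0 ≤ (p k - q k) ^ 2 / q k := fun k => div_nonneg (sq_nonneg _) (hq k).le
  refine Summable.tsum_le_of_sum_le habs fun F => ?_
  rw [Real.le_sqrt (Finset.sum_nonneg fun k _ => abs_nonneg _)
    (by rw [← hchival]; exact tsum_nonneg hnn)]
  calc (∑ k ∈ F, |p k - q k|) ^ 2
      = (∑ k ∈ F, (|p k - q k| / Real.sqrt (q k)) * Real.sqrt (q k)) ^ 2 := by
        congr 1; refine Finset.sum_congr rfl fun k _ => ?_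
        rw [div_mul_cancel₀ _ (Real.sqrt_ne_zero'.mpr (hq k))]
    _ ≤ (∑ k ∈ F, (|p k - q k| / Real.sqrt (q k)) ^ 2) * ∑ k ∈ F, Real.sqrt (q k) ^ 2 :=
        Finset.sum_mul_sq_le_sq_mul_sq F _ _
    _ = (∑ k ∈ F, (p k - q k) ^ 2 / q k) * ∑ k ∈ F, q k := by
        congr 1
        · refine Finset.sum_congr rfl fun k _ => ?_
          rw [div_pow, sq_abs, Real.sq_sqrt (hq k).le]
        · exact Finset.sum_congr rfl fun k _ => Real.sq_sqrt (hq k).le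
    _ ≤ (Real.exp ((c : ℝ) ^ 2 / (lam : ℝ)) - 1) * 1 := by
        refine mul_le_mul ?_ ?_ (Finset.sum_nonneg fun k _ => (hq k).le)
          (by rw [← hchival]; exact tsum_nonneg hnn)
        · rw [← hchival]
          exact Summable.sum_le_tsum F (fun k _ => hnn k) hchi
        · rw [← (poissonPMFRealSum lam).tsum_eq]
          exact Summable.sum_le_tsum F (fun k _ => (hq k).le) hqs
    _ = _ := mul_one _

private lemma indicator_tsum_diff_le (p q : ℕ → ℝ) (hp : Summable p) (hq : Summable q)
    (A : Set ℕ) :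
    |(∑' k, A.indicator p k) - ∑' k, A.indicator q k| ≤ ∑' k, |p k - q k| := by
  have h1 : Summable (A.indicator p) := hp.indicator A
  have h2 : Summable (A.indicator q) := hq.indicator A
  rw [← Summable.tsum_sub h1 h2]
  calc |∑' k, (A.indicator p k - A.indicator q k)|
      ≤ ∑' k, |A.indicator p k - A.indicator q k| := by
        simpa using norm_tsum_le_tsum_norm (f := fun k => A.indicator p k - A.indicator q k)
          (by simpa using (h1.sub h2).abs)
    _ ≤ ∑' k, |p k - q k| := by
        refine Summable.tsum_le_tsum (fun k => ?_) (h1.sub h2).abs (hp.sub hq).abs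
        by_cases hk : k ∈ A <;> simp [Set.indicator, hk, abs_nonneg]

end PoissonHelpers

theorem dTV_poisson_shift_tendsto_zero (c : ℝ≥0) (hc : 0 < c) :
    Filter.Tendsto (fun lam : ℝ≥0 =>
        dTV (ProbabilityTheory.poissonMeasure (lam + c))
          (ProbabilityTheory.poissonMeasure lam))
      Filter.atTop (nhds 0) := by
  have key : ∀ lam : ℝ≥0, 0 < lam →
      dTV (poissonMeasure (lam + c)) (poissonMeasure lam)
        ≤ Real.sqrt (Real.exp ((c : ℝ) ^ 2 / (lam : ℝ)) - 1) := by
    intro lam hlam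
    have hchi := poisson_chisq lam c hlam
    have hl1 := poisson_l1_le lam c hlam hchi.summable hchi.tsum_eq
    refine le_trans ?_ hl1
    rw [dTV]
    refine ciSup_le fun A => ?_
    rw [poisson_apply', poisson_apply']
    exact indicator_tsum_diff_le _ _ (poissonPMFRealSum _).summable
      (poissonPMFRealSum _).summable A
  have hnonneg : ∀ lam : ℝ≥0, 0 ≤ dTV (poissonMeasure (lam + c)) (poissonMeasure lam) := by
    intro lam
    rw [dTV]
    exact Real.iSup_nonneg fun A => abs_nonneg _
  have hg : Tendsto (fun lam : ℝ≥0 => Real.sqrt (Real.exp ((c : ℝ) ^ 2 / (lam : ℝ)) - 1))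
      atTop (nhds 0) := by
    have h1 : Tendsto (fun lam : ℝ≥0 => ((lam : ℝ))) atTop atTop :=
      NNReal.tendsto_coe_atTop.mpr tendsto_id
    have h2 : Tendsto (fun lam : ℝ≥0 => (c : ℝ) ^ 2 / (lam : ℝ)) atTop (nhds 0) :=
      Tendsto.div_atTop tendsto_const_nhds h1
    have h3 : Tendsto (fun x : ℝ => Real.sqrt (Real.exp x - 1)) (nhds 0) (nhds 0) := by
      have hcont : Continuous (fun x : ℝ => Real.sqrt (Real.exp x - 1)) :=
        (Real.continuous_exp.sub continuous_const).sqrt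
      have := hcont.tendsto 0
      simpa using this
    exact h3.comp h2
  refine tendsto_of_tendsto_of_tendsto_of_le_of_le' tendsto_const_nhds hg ?_ ?_
  · exact Eventually.of_forall fun lam => hnonneg lam
  · filter_upwards [eventually_ge_atTop 1] with lam hlam
    exact key lam (lt_of_lt_of_le one_pos hlam)
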